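/- Lower bound of 4 for oblivious total completion time: for every even n and every subset S ⊆ {1,…,n} with |S| ≤ n/2, set p^∧(j) = 1 for all j, p^∨(j) = 1 for j ∈ S and p^∨(j) = 0 otherwise. Then every schedule that tests exactly the set S has total completion time n(n+1)/2, while testing the n/2 jobs outside S yields total completion time n/2·(n/2+1)/2 = n(n+2)/8; consequently the competitive ratio is at least 4(n+1)/(n+2), which tends to 4 as n → ∞. -/

import Mathlib

open Finset

lemma sum_range_id_real (n : ℕ) : ∑ i ∈ Finset.range n, (i : ℝ) = n * (n - 1) / 2 := by
  induction n with
  | zero => simp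
  | succ k ih => rw [Finset.sum_range_succ, ih]; push_cast; ring

lemma sum_n_sub (n : ℕ) : ∑ i ∈ Finset.range n, ((n : ℝ) - i) = n * (n + 1) / 2 := by
  rw [Finset.sum_sub_distrib, Finset.sum_const, card_range, nsmul_eq_mul, sum_range_id_real]
  ring

theorem oblivious_total_completion_lower_bound_four
    (n : ℕ) (hpos : 0 < n) (hn : Even n)
    (S : Finset (Fin n)) (hS : 2 * S.card ≤ n)
    (pUp pLow : Fin n → ℝ)
    (hUp : ∀ j, pUp j = 1)
    (hLow : ∀ j, pLow j = if j ∈ S then 1 else 0) :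
    (∀ σ : Equiv.Perm (Fin n),
        ∑ i : Fin n, ((n : ℝ) - ((i : ℕ) : ℝ)) *
            (if σ i ∈ S then pLow (σ i) else pUp (σ i))
          = (n : ℝ) * (n + 1) / 2)
    ∧ (∃ T : Finset (Fin n), T ⊆ Sᶜ ∧ 2 * T.card = n ∧
        ∃ σ : Equiv.Perm (Fin n),
          ∑ i : Fin n, ((n : ℝ) - ((i : ℕ) : ℝ)) *
              (if σ i ∈ T then pLow (σ i) else pUp (σ i))
            = (n : ℝ) * (n + 2) / 8)
    ∧ (n : ℝ) * (n + 1) / 2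
        = (4 * ((n : ℝ) + 1) / ((n : ℝ) + 2)) * ((n : ℝ) * (n + 2) / 8) := by
  obtain ⟨m, hm⟩ := hn
  have hmn : m ≤ n := by omega
  refine ⟨?_, ?_, ?_⟩
  · intro σ
    have h1 : ∀ i : Fin n, ((n : ℝ) - ((i : ℕ) : ℝ)) *
        (if σ i ∈ S then pLow (σ i) else pUp (σ i)) = (n : ℝ) - ((i : ℕ) : ℝ) := by
      intro i
      by_cases h : σ i ∈ S <;> simp [h, hLow, hUp]
    rw [Finset.sum_congr rfl (fun i _ => h1 i), Fin.sum_univ_eq_sum_range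
      (fun i => (n : ℝ) - (i : ℕ)), sum_n_sub]
  · -- construct T
    have hScard : m ≤ Sᶜ.card := by
      have := Finset.card_compl S
      have hc : S.card ≤ m := by omega
      simp only [Fintype.card_fin] at this
      omega
    obtain ⟨T, hTsub, hTcard⟩ := Finset.exists_subset_card_eq hScard
    refine ⟨T, hTsub, by omega, ?_⟩
    -- P : positions 0..m-1
    set P : Finset (Fin n) := (Finset.range m).attachFin
      (fun x hx => lt_of_lt_of_le (Finset.mem_range.mp hx) hmn) with hP
    have hPmem : ∀ i : Fin n, i ∈ P ↔ (i : ℕ) < m := by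
      intro i; simp [hP, Finset.mem_attachFin]
    have hPcard : P.card = m := by
      simp [hP, Finset.card_attachFin]
    classical
    have hecard : Fintype.card {x : Fin n // x ∈ P} = Fintype.card {x : Fin n // x ∈ T} := by
      simp [Fintype.card_coe, hPcard, hTcard]
    have hfcard : Fintype.card {x : Fin n // ¬ x ∈ P} = Fintype.card {x : Fin n // ¬ x ∈ T} := by
      rw [Fintype.card_subtype_compl, Fintype.card_subtype_compl, hecard]
    let e : {x : Fin n // x ∈ P} ≃ {x : Fin n // x ∈ T} := Fintype.equivOfCardEq hecard
    let f : {x : Fin n // ¬ x ∈ P} ≃ {x : Fin n // ¬ x ∈ T} := Fintype.equivOfCardEq hfcard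
    refine ⟨Equiv.subtypeCongr e f, ?_⟩
    have hkey : ∀ i : Fin n, (Equiv.subtypeCongr e f i ∈ T) ↔ i ∈ P := by
      intro i
      by_cases h : i ∈ P
      · simp only [Equiv.subtypeCongr, Equiv.trans_apply,
          Equiv.sumCompl_symm_apply_of_pos h, Equiv.sumCongr_apply, Sum.map_inl,
          Equiv.sumCompl_apply_inl]
        exact ⟨fun _ => h, fun _ => (e ⟨i, h⟩).2⟩
      · simp only [Equiv.subtypeCongr, Equiv.trans_apply,
          Equiv.sumCompl_symm_apply_of_neg h, Equiv.sumCongr_apply, Sum.map_inr,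
          Equiv.sumCompl_apply_inr]
        exact ⟨fun hc => absurd hc (f ⟨i, h⟩).2, fun hc => absurd hc h⟩
    have hterm : ∀ i : Fin n, ((n : ℝ) - ((i : ℕ) : ℝ)) *
        (if Equiv.subtypeCongr e f i ∈ T then pLow (Equiv.subtypeCongr e f i)
          else pUp (Equiv.subtypeCongr e f i))
        = ((n : ℝ) - ((i : ℕ) : ℝ)) * (if (i : ℕ) < m then 0 else 1) := by
      intro i
      by_cases h : (i : ℕ) < m
      · have hiT : Equiv.subtypeCongr e f i ∈ T := (hkey i).mpr ((hPmem i).mpr h)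
        have : Equiv.subtypeCongr e f i ∉ S := by
          have := hTsub hiT; simpa using this
        simp [hiT, hLow, this, h]
      · have hiT : Equiv.subtypeCongr e f i ∉ T := by
          intro hc
          exact h ((hPmem i).mp ((hkey i).mp hc))
        simp [hiT, hUp, h]
    rw [Finset.sum_congr rfl (fun i _ => hterm i),
      Fin.sum_univ_eq_sum_range (fun i => ((n : ℝ) - (i : ℕ)) * (if i < m then 0 else 1))]
    have hsplit : Finset.range n = Finset.Ico 0 n := by rw [Finset.range_eq_Ico]
    rw [hsplit, ← Finset.sum_Ico_consecutive _ (Nat.zero_le m) hmn]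
    have h1 : ∑ i ∈ Finset.Ico 0 m, ((n : ℝ) - (i : ℕ)) * (if i < m then 0 else 1) = 0 := by
      apply Finset.sum_eq_zero
      intro i hi
      simp [Finset.mem_Ico.mp hi |>.2]
    have h2 : ∑ i ∈ Finset.Ico m n, ((n : ℝ) - (i : ℕ)) * (if i < m then 0 else 1)
        = ∑ i ∈ Finset.Ico m n, ((n : ℝ) - (i : ℕ)) := by
      apply Finset.sum_congr rfl
      intro i hi
      have : ¬ i < m := not_lt.mpr (Finset.mem_Ico.mp hi).1
      simp [this]
    rw [h1, h2, zero_add]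
    have h3 : ∑ i ∈ Finset.Ico m n, ((n : ℝ) - (i : ℕ))
        = ∑ i ∈ Finset.range n, ((n : ℝ) - (i : ℕ)) - ∑ i ∈ Finset.range m, ((n : ℝ) - (i : ℕ)) := by
      rw [Finset.range_eq_Ico, Finset.range_eq_Ico, ← Finset.sum_Ico_consecutive _ (Nat.zero_le m) hmn]
      ring
    rw [h3, sum_n_sub, Finset.sum_sub_distrib, Finset.sum_const, card_range, nsmul_eq_mul,
      sum_range_id_real]
    have : (n : ℝ) = 2 * m := by rw [hm]; push_cast; ring
    rw [this]
    ring
  · have hne : (n : ℝ) + 2 ≠ 0 := by positivity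
    field_simp
    ring
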